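/- Every level-1 network is a strong lca-network; in particular, in a level-1 network N on X, every nonempty subset A ⊆ X has a unique least common ancestor lca(A), and there exist x, y ∈ A with lca({x,y}) = lca(A). -/

import Mathlib

namespace PhyloNet

/-- A (rooted) network on a set `X` of taxa: a finite directed acyclic graph with a
unique vertex of indegree 0 (the root), whose vertices of outdegree 0 (the leaves)
are exactly the elements of `X` (via the injection `leafEmb`). -/
structure Network (X : Type) where
  V : Type
  [fintypeV : Fintype V]
  E : V → V → Prop
  leafEmb : X → V
  leafEmb_inj : Function.Injective leafEmb
  acyclic : ∀ u v : V, E u v → ¬ Relation.ReflTransGen E v u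
  root_unique : ∃! r : V, ∀ u : V, ¬ E u r
  leaf_iff : ∀ v : V, (∀ w : V, ¬ E v w) ↔ ∃ x : X, leafEmb x = v

attribute [instance] Network.fintypeV

variable {X : Type}

namespace Network

/-- `reach u v` : there is a directed path (possibly trivial) from `u` to `v`,
i.e. `v ⪯ u`. -/
def reach (N : Network X) : N.V → N.V → Prop := Relation.ReflTransGen N.E

/-- The cluster of a vertex: the set of leaves reachable from it. -/
def cluster (N : Network X) (v : N.V) : Set X := {x | N.reach v (N.leafEmb x)}

/-- The clustering system of a network. -/
def CS (N : Network X) : Set (Set X) := Set.range N.cluster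

noncomputable def inDeg (N : Network X) (v : N.V) : ℕ := {u | N.E u v}.ncard
noncomputable def outDeg (N : Network X) (v : N.V) : ℕ := {w | N.E v w}.ncard

def IsHybrid (N : Network X) (v : N.V) : Prop := 1 < N.inDeg v
def IsTreeVertex (N : Network X) (v : N.V) : Prop := N.inDeg v ≤ 1
def IsLeaf (N : Network X) (v : N.V) : Prop := ∀ w : N.V, ¬ N.E v w

/-- The arc `(u,w)` is a shortcut: `w ≺ v` for some child `v ≠ w` of `u`. -/
def IsShortcut (N : Network X) (u w : N.V) : Prop :=
  N.E u w ∧ ∃ v : N.V, N.E u v ∧ v ≠ w ∧ N.reach v w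

def ShortcutFree (N : Network X) : Prop := ∀ u w : N.V, ¬ N.IsShortcut u w

/-- Path-cluster comparability. -/
def PCC (N : Network X) : Prop :=
  ∀ u v : N.V, (N.reach u v ∨ N.reach v u) ↔
    (N.cluster u ⊆ N.cluster v ∨ N.cluster v ⊆ N.cluster u)

def SemiRegular (N : Network X) : Prop := N.ShortcutFree ∧ N.PCC

/-- `N` is regular iff `v ↦ C(v)` is a digraph isomorphism onto the Hasse diagram
of `𝒞_N` (ordered by inclusion). -/
def Regular (N : Network X) : Prop :=
  Function.Injective N.cluster ∧
  ∀ u v : N.V, N.E u v ↔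
    (N.cluster v ⊂ N.cluster u ∧
      ¬ ∃ w : N.V, N.cluster v ⊂ N.cluster w ∧ N.cluster w ⊂ N.cluster u)

def Separated (N : Network X) : Prop := ∀ v : N.V, N.IsHybrid v → N.outDeg v = 1

def Phylogenetic (N : Network X) : Prop := ¬ ∃ v : N.V, N.outDeg v = 1 ∧ N.inDeg v ≤ 1

def Binary (N : Network X) : Prop :=
  (∀ v : N.V, N.IsTreeVertex v → (N.IsLeaf v ∨ N.outDeg v = 2)) ∧
  (∀ v : N.V, N.IsHybrid v → N.inDeg v = 2 ∧ N.outDeg v = 1)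

def TreeChild (N : Network X) : Prop :=
  ∀ v : N.V, ¬ N.IsLeaf v → ∃ u : N.V, N.E v u ∧ N.inDeg u = 1

/-- The underlying undirected (simple) graph of a network. -/
def UG (N : Network X) : SimpleGraph N.V where
  Adj u v := u ≠ v ∧ (N.E u v ∨ N.E v u)
  symm := ⟨fun _ _ h => ⟨Ne.symm h.1, Or.symm h.2⟩⟩
  loopless := ⟨fun _ h => h.1 rfl⟩

/-- A set of vertices is biconnected if it induces a connected undirected graph
with no cutvertex. -/
def IsBiconn (N : Network X) (B : Set N.V) : Prop :=
  (N.UG.induce B).Connected ∧ ∀ v ∈ B, (N.UG.induce (B \ {v})).Preconnected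

/-- A block: a maximal biconnected set of vertices. -/
def IsBlock (N : Network X) (B : Set N.V) : Prop :=
  N.IsBiconn B ∧ ∀ B' : Set N.V, B ⊆ B' → N.IsBiconn B' → B' = B

/-- The set `B` contains an undirected cycle (`B` is a non-trivial block when it is
a block). -/
def HasCycleIn (N : Network X) (B : Set N.V) : Prop :=
  ∃ (v : N.V) (c : N.UG.Walk v v), c.IsCycle ∧ ∀ w ∈ c.support, w ∈ B

/-- Level-1: each block contains at most one hybrid vertex that is not
`⪯`-maximal in the block. -/
def Level1 (N : Network X) : Prop :=
  ∀ B : Set N.V, N.IsBlock B →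
    Set.Subsingleton {v : N.V | v ∈ B ∧ N.IsHybrid v ∧ ∃ u ∈ B, u ≠ v ∧ N.reach u v}

/-- The set `B` (with the edges of the underlying undirected graph between its
members) is exactly an undirected cycle. -/
def IsCycleSet (N : Network X) (B : Set N.V) : Prop :=
  ∃ (v : N.V) (c : N.UG.Walk v v), c.IsCycle ∧ (∀ w : N.V, w ∈ c.support ↔ w ∈ B) ∧
    ∀ u w : N.V, (N.UG.Adj u w ∧ u ∈ B ∧ w ∈ B) ↔ s(u, w) ∈ c.edges

/-- A galled tree: every non-trivial block is an undirected cycle. -/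
def GalledTree (N : Network X) : Prop :=
  ∀ B : Set N.V, N.IsBlock B → N.HasCycleIn B → N.IsCycleSet B

/-- Quasi-binary: hybrid vertices have indegree 2 and outdegree 1, and the
`⪯`-maximal vertex of every non-trivial block has outdegree 2. -/
def QuasiBinary (N : Network X) : Prop :=
  (∀ v : N.V, N.IsHybrid v → N.inDeg v = 2 ∧ N.outDeg v = 1) ∧
  ∀ B : Set N.V, N.IsBlock B → N.HasCycleIn B →
    ∀ v ∈ B, (∀ u ∈ B, N.reach u v → u = v) → N.outDeg v = 2

/-- `LCA A`: the `⪯`-minimal vertices among the common ancestors of `A`. -/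
def LCA (N : Network X) (A : Set X) : Set N.V :=
  {v : N.V | A ⊆ N.cluster v ∧ ∀ u : N.V, A ⊆ N.cluster u → N.reach v u → u = v}

/-- An lca-network: every nonempty set of leaves has a unique least common
ancestor. -/
def LcaNetwork (N : Network X) : Prop :=
  ∀ A : Set X, A.Nonempty → ∃ v : N.V, N.LCA A = {v}

/-- A strong lca-network. -/
def StrongLca (N : Network X) : Prop :=
  N.LcaNetwork ∧
  ∀ A : Set X, A.Nonempty → ∃ x ∈ A, ∃ y ∈ A, N.LCA ({x, y} : Set X) = N.LCA A

/-- Cluster networks in the sense of Huson & Rupp. -/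
def ClusterNetwork (N : Network X) : Prop :=
  N.PCC ∧
  (∀ u v : N.V, N.cluster u = N.cluster v ↔
    (u = v ∨ (N.IsHybrid v ∧ N.E v u) ∨ (N.IsHybrid u ∧ N.E u v))) ∧
  (∀ u v : N.V, N.E v u →
    ¬ ∃ w : N.V, N.cluster u ⊂ N.cluster w ∧ N.cluster w ⊂ N.cluster v) ∧
  (∀ v : N.V, N.IsHybrid v →
    ∃ u : N.V, N.E v u ∧ (∀ w : N.V, N.E v w → w = u) ∧ N.IsTreeVertex u)

/-- The multiplicity of a cluster in the cluster multiset `𝓜_N`. -/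
noncomputable def multiplicity (N : Network X) (C : Set X) : ℕ :=
  Nat.card {v : N.V // N.cluster v = C}

/-- Isomorphism of networks on the same leaf set `X`, fixing every leaf. -/
def Isomorphic (N N' : Network X) : Prop :=
  ∃ φ : N.V ≃ N'.V, (∀ u v : N.V, N.E u v ↔ N'.E (φ u) (φ v)) ∧
    ∀ x : X, φ (N.leafEmb x) = N'.leafEmb x

end Network

/-- A clustering system on `X`. -/
def IsClusteringSystem {X : Type} (𝒞 : Set (Set X)) : Prop :=
  ∅ ∉ 𝒞 ∧ Set.univ ∈ 𝒞 ∧ ∀ x : X, {x} ∈ 𝒞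

/-- Two sets overlap if `A ∩ B ∉ {∅, A, B}`. -/
def Overlap {X : Type} (A B : Set X) : Prop :=
  (A ∩ B).Nonempty ∧ A ∩ B ≠ A ∧ A ∩ B ≠ B

/-- Closed (under pairwise nonempty intersections). -/
def IsClosedCS {X : Type} (𝒞 : Set (Set X)) : Prop :=
  ∀ A ∈ 𝒞, ∀ B ∈ 𝒞, (A ∩ B).Nonempty → A ∩ B ∈ 𝒞

/-- Property (L). -/
def PropertyL {X : Type} (𝒞 : Set (Set X)) : Prop :=
  ∀ C₁ ∈ 𝒞, ∀ C₂ ∈ 𝒞, ∀ C₃ ∈ 𝒞, Overlap C₁ C₂ → Overlap C₁ C₃ → C₁ ∩ C₂ = C₁ ∩ C₃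

/-- Weak hierarchy. -/
def WeakHierarchy {X : Type} (𝒞 : Set (Set X)) : Prop :=
  ∀ C₁ ∈ 𝒞, ∀ C₂ ∈ 𝒞, ∀ C₃ ∈ 𝒞,
    C₁ ∩ C₂ ∩ C₃ = C₁ ∩ C₂ ∨ C₁ ∩ C₂ ∩ C₃ = C₁ ∩ C₃ ∨
    C₁ ∩ C₂ ∩ C₃ = C₂ ∩ C₃ ∨ C₁ ∩ C₂ ∩ C₃ = ∅

/-- Property (N3O): no three distinct pairwise overlapping clusters. -/
def N3O {X : Type} (𝒞 : Set (Set X)) : Prop :=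
  ¬ ∃ C₁ ∈ 𝒞, ∃ C₂ ∈ 𝒞, ∃ C₃ ∈ 𝒞,
    C₁ ≠ C₂ ∧ C₁ ≠ C₃ ∧ C₂ ≠ C₃ ∧ Overlap C₁ C₂ ∧ Overlap C₁ C₃ ∧ Overlap C₂ C₃

/-- Property (2-Inc). -/
def TwoInc {X : Type} (𝒞 : Set (Set X)) : Prop :=
  ∀ C ∈ 𝒞,
    {A : Set X | A ∈ 𝒞 ∧ A ⊂ C ∧ ∀ B ∈ 𝒞, B ⊂ C → A ⊆ B → A = B}.ncard ≤ 2 ∧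
    {A : Set X | A ∈ 𝒞 ∧ C ⊂ A ∧ ∀ B ∈ 𝒞, C ⊂ B → B ⊆ A → A = B}.ncard ≤ 2

/-- The intersection closure: all nonempty intersections of nonempty subfamilies. -/
def interClosure {X : Type} (𝒞 : Set (Set X)) : Set (Set X) :=
  {A : Set X | A.Nonempty ∧ ∃ S : Set (Set X), S ⊆ 𝒞 ∧ S.Nonempty ∧ A = ⋂₀ S}

namespace Network

variable {X : Type}

-- ### basic order lemmas

lemma E_not_reach (N : Network X) {u v : N.V} (h : N.E u v) : ¬ N.reach v u := N.acyclic u v h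

lemma E_ne (N : Network X) {u v : N.V} (h : N.E u v) : u ≠ v := by
  rintro rfl; exact N.acyclic _ _ h Relation.ReflTransGen.refl

lemma E_reach (N : Network X) {u v : N.V} (h : N.E u v) : N.reach u v :=
  Relation.ReflTransGen.single h

lemma reach_refl (N : Network X) (v : N.V) : N.reach v v := Relation.ReflTransGen.refl

lemma reach_trans (N : Network X) {u v w : N.V} (h : N.reach u v) (h' : N.reach v w) :
    N.reach u w := Relation.ReflTransGen.trans h h'

lemma reach_antisymm (N : Network X) {u v : N.V} (h : N.reach u v) (h' : N.reach v u) : u = v := by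
  rcases (Relation.ReflTransGen.cases_head h) with rfl | ⟨c, hc, hcv⟩
  · rfl
  · exact absurd (N.reach_trans hcv h') (N.acyclic _ _ hc)

lemma mem_cluster (N : Network X) {v : N.V} {x : X} :
    x ∈ N.cluster v ↔ N.reach v (N.leafEmb x) := Iff.rfl

lemma cluster_mono (N : Network X) {u v : N.V} (h : N.reach u v) :
    N.cluster v ⊆ N.cluster u := fun _ hx => N.reach_trans h hx

lemma leaf_no_out (N : Network X) {x : X} {w : N.V} : ¬ N.E (N.leafEmb x) w :=
  (N.leaf_iff _).mpr ⟨x, rfl⟩ w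

lemma reach_leaf (N : Network X) {x : X} {w : N.V} (h : N.reach (N.leafEmb x) w) :
    w = N.leafEmb x := by
  rcases (Relation.ReflTransGen.cases_head h) with rfl | ⟨c, hc, _⟩
  · rfl
  · exact absurd hc N.leaf_no_out

lemma desc_lt (N : Network X) {u v : N.V} (h : N.reach u v) (hne : u ≠ v) :
    {w | N.reach v w}.ncard < {w | N.reach u w}.ncard := by
  apply Set.ncard_lt_ncard _ (Set.toFinite _)
  rw [Set.ssubset_iff_subset_ne]
  constructor
  · exact fun w hw => N.reach_trans h hw
  · intro heq
    have : N.reach v u := by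
      have : u ∈ {w | N.reach v w} := heq ▸ (show u ∈ {w | N.reach u w} from N.reach_refl u)
      exact this
    exact hne (N.reach_antisymm h this)

lemma exists_reach_min (N : Network X) (S : Set N.V) (hS : S.Nonempty) :
    ∃ v ∈ S, ∀ u ∈ S, N.reach v u → u = v := by
  obtain ⟨v, hv, hmin⟩ := Set.exists_min_image S (fun v => {w | N.reach v w}.ncard)
    (Set.toFinite S) hS
  refine ⟨v, hv, fun u hu hr => ?_⟩
  by_contra hne
  exact absurd (hmin u hu) (not_le.mpr (N.desc_lt hr (fun h => hne h.symm)))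

lemma exists_reach_max (N : Network X) (S : Set N.V) (hS : S.Nonempty) :
    ∃ v ∈ S, ∀ u ∈ S, N.reach u v → u = v := by
  obtain ⟨v, hv, hmax⟩ := Set.exists_max_image S (fun v => {w | N.reach v w}.ncard)
    (Set.toFinite S) hS
  refine ⟨v, hv, fun u hu hr => ?_⟩
  by_contra hne
  exact absurd (hmax u hu) (not_le.mpr (N.desc_lt hr hne))

lemma exists_top (N : Network X) : ∃ r : N.V, ∀ v, N.reach r v := by
  obtain ⟨r, hr, hru⟩ := N.root_unique
  refine ⟨r, ?_⟩
  have key : ∀ n : ℕ, ∀ v : N.V, {u | N.reach u v ∧ u ≠ v}.ncard = n → N.reach r v := by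
    intro n
    induction n using Nat.strong_induction_on with
    | _ n IH =>
      intro v hn
      by_cases hv : v = r
      · subst hv; exact N.reach_refl _
      · have : ¬ ∀ u, ¬ N.E u v := fun h => hv (hru v h)
        push_neg at this
        obtain ⟨u, hu⟩ := this
        have hss : {z | N.reach z u ∧ z ≠ u} ⊂ {z | N.reach z v ∧ z ≠ v} := by
          rw [Set.ssubset_iff_subset_ne]
          constructor
          · rintro z ⟨hz, hzu⟩
            refine ⟨N.reach_trans hz (N.E_reach hu), ?_⟩
            rintro rfl
            exact N.acyclic _ _ hu hz
          · intro heq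
            have hmem : u ∈ {z | N.reach z v ∧ z ≠ v} := ⟨N.E_reach hu, N.E_ne hu⟩
            rw [← heq] at hmem
            exact hmem.2 rfl
        have hlt : {z | N.reach z u ∧ z ≠ u}.ncard < n :=
          hn ▸ Set.ncard_lt_ncard hss (Set.toFinite _)
        exact N.reach_trans (IH _ hlt u rfl) (N.E_reach hu)
  intro v
  exact key _ v rfl


-- ### directed paths

inductive DP (N : Network X) : N.V → N.V → Type
  | nil (v : N.V) : DP N v v
  | cons {u v w : N.V} (e : N.E u v) (p : DP N v w) : DP N u w

namespace DP

variable {N : Network X}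

def supp : {u v : N.V} → DP N u v → List N.V
  | _, _, .nil v => [v]
  | u, _, .cons _ p => u :: p.supp

lemma reach_of {u v : N.V} (p : DP N u v) : N.reach u v := by
  induction p with
  | nil v => exact N.reach_refl v
  | cons e _ IH => exact N.reach_trans (N.E_reach e) IH

lemma start_mem_supp {u v : N.V} (p : DP N u v) : u ∈ p.supp := by
  cases p <;> simp [supp]

lemma end_mem_supp {u v : N.V} (p : DP N u v) : v ∈ p.supp := by
  induction p with
  | nil v => simp [supp]
  | cons e p IH => simp [supp, IH]

lemma supp_eq_cons {u v : N.V} (p : DP N u v) : ∃ l, p.supp = u :: l := by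
  cases p <;> simp [supp]

lemma supp_eq_snoc {u v : N.V} (p : DP N u v) : ∃ l, p.supp = l ++ [v] := by
  induction p with
  | nil v => exact ⟨[], rfl⟩
  | @cons u' a' v' e p IH =>
    obtain ⟨l, hl⟩ := IH
    exact ⟨u' :: l, by simp [supp, hl]⟩

lemma mem_supp_reach {u v z : N.V} (p : DP N u v) (hz : z ∈ p.supp) :
    N.reach u z ∧ N.reach z v := by
  induction p with
  | nil v => simp [supp] at hz; subst hz; exact ⟨N.reach_refl _, N.reach_refl _⟩
  | cons e p IH =>
    rw [supp, List.mem_cons] at hz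
    rcases hz with rfl | hz
    · exact ⟨N.reach_refl _, N.reach_trans (N.E_reach e) p.reach_of⟩
    · exact ⟨N.reach_trans (N.E_reach e) (IH hz).1, (IH hz).2⟩

lemma supp_nodup {u v : N.V} (p : DP N u v) : p.supp.Nodup := by
  induction p with
  | nil v => simp [supp]
  | cons e p IH =>
    rw [supp, List.nodup_cons]
    refine ⟨fun hu => ?_, IH⟩
    exact N.acyclic _ _ e (p.mem_supp_reach hu).1

lemma exists_dp {u v : N.V} (h : N.reach u v) : Nonempty (DP N u v) := by
  induction h using Relation.ReflTransGen.head_induction_on with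
  | refl => exact ⟨.nil v⟩
  | head e _ IH => exact ⟨.cons e IH.some⟩

lemma end_mem_supp_tail {u v : N.V} (p : DP N u v) (h : u ≠ v) : v ∈ p.supp.tail := by
  cases p with
  | nil => exact absurd rfl h
  | cons e q => simpa [supp] using q.end_mem_supp

lemma snoc_decomp {u v : N.V} (p : DP N u v) (huv : u ≠ v) :
    ∃ (w : N.V) (q : DP N u w) (e : N.E w v), p.supp = q.supp ++ [v] := by
  induction p with
  | nil v => exact absurd rfl huv
  | @cons u a v e q IH =>
    by_cases hav : a = v
    · subst hav
      cases q with
      | nil => exact ⟨u, .nil u, e, rfl⟩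
      | cons e' q' => exact absurd q'.reach_of (N.acyclic _ _ e')
    · obtain ⟨w0, q0, e0, hs⟩ := IH hav
      exact ⟨w0, .cons e q0, e0, by simp [supp, hs]⟩

def toWalk : {u v : N.V} → (p : DP N u v) → N.UG.Walk u v
  | _, _, .nil _ => SimpleGraph.Walk.nil
  | _, _, .cons e p => SimpleGraph.Walk.cons ⟨N.E_ne e, Or.inl e⟩ p.toWalk

lemma support_toWalk {u v : N.V} (p : DP N u v) : p.toWalk.support = p.supp := by
  induction p with
  | nil v => rfl
  | cons e p IH => simp only [toWalk, supp]; exact congrArg (List.cons _) IH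

end DP




-- ### generic graph helpers
section Graph

variable {V : Type} {G : SimpleGraph V}

lemma reachable_induce_of_walk {S : Set V} :
    ∀ {a b : V} (w : G.Walk a b), (∀ z ∈ w.support, z ∈ S) →
      ∀ (ha : a ∈ S) (hb : b ∈ S), (G.induce S).Reachable ⟨a, ha⟩ ⟨b, hb⟩ := by
  intro a b w
  induction w with
  | nil => intro _ ha hb; exact SimpleGraph.Reachable.refl _
  | @cons a c b adj p IH =>
    intro h ha hb
    have hc : c ∈ S := h c (by simp [SimpleGraph.Walk.support_cons, p.start_mem_support])
    have adj' : (G.induce S).Adj ⟨a, ha⟩ ⟨c, hc⟩ := by simpa using adj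
    exact adj'.reachable.trans (IH (fun z hz => h z (by simp [SimpleGraph.Walk.support_cons, hz])) hc hb)

lemma reachable_induce_mono {S T : Set V} (hST : S ⊆ T) {a b : S}
    (h : (G.induce S).Reachable a b) :
    (G.induce T).Reachable ⟨a.1, hST a.2⟩ ⟨b.1, hST b.2⟩ := by
  obtain ⟨w⟩ := h
  induction w with
  | nil => exact SimpleGraph.Reachable.refl _
  | @cons x y z adj p IH =>
    have adj' : (G.induce T).Adj ⟨x.1, hST x.2⟩ ⟨y.1, hST y.2⟩ := by
      simp only [SimpleGraph.comap_adj, Function.Embedding.coe_subtype] at adj ⊢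
      exact adj
    exact adj'.reachable.trans IH

lemma takeUntil_avoid [DecidableEq V] {a t c : V} (w : G.Walk a t) (hw : w.IsPath)
    (hc : c ∈ w.support) (hct : c ≠ t) :
    t ∉ (w.takeUntil c hc).support := by
  intro hmem
  have hnodup : w.support.Nodup := hw.support_nodup
  rw [← w.take_spec hc, SimpleGraph.Walk.support_append] at hnodup
  have ht2 : t ∈ (w.dropUntil c hc).support.tail := by
    have h1 : t ∈ (w.dropUntil c hc).support := SimpleGraph.Walk.end_mem_support _
    rw [SimpleGraph.Walk.support_eq_cons] at h1
    rcases List.mem_cons.mp h1 with h1 | h1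
    · exact absurd h1.symm hct
    · exact h1
  exact (List.disjoint_of_nodup_append hnodup) hmem ht2

lemma exists_walk_avoid [DecidableEq V] {s t : V} (p : G.Walk s t) (hp : p.IsPath) {a b : V}
    (ha : a ∈ p.support) (hb : b ∈ p.support) (hat : a ≠ t) (hbt : b ≠ t) :
    ∃ q : G.Walk a b, ∀ z ∈ q.support, z ∈ p.support ∧ z ≠ t := by
  by_cases hb' : b ∈ (p.dropUntil a ha).support
  · have hp' : (p.dropUntil a ha).IsPath := hp.dropUntil ha
    refine ⟨(p.dropUntil a ha).takeUntil b hb', fun z hz => ?_⟩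
    have hz1 : z ∈ (p.dropUntil a ha).support :=
      ((p.dropUntil a ha).support_takeUntil_subset hb') hz
    refine ⟨(p.support_dropUntil_subset ha) hz1, ?_⟩
    rintro rfl
    exact (takeUntil_avoid _ hp' hb' hbt) hz
  · have hb'' : b ∈ (p.takeUntil a ha).support := by
      have := hb
      rw [← p.take_spec ha, SimpleGraph.Walk.mem_support_append_iff] at this
      rcases this with h | h
      · exact h
      · exact absurd h hb'
    refine ⟨((p.takeUntil a ha).dropUntil b hb'').reverse, fun z hz => ?_⟩
    rw [SimpleGraph.Walk.support_reverse, List.mem_reverse] at hz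
    have hz1 : z ∈ (p.takeUntil a ha).support :=
      ((p.takeUntil a ha).support_dropUntil_subset hb'') hz
    refine ⟨(p.support_takeUntil_subset ha) hz1, ?_⟩
    rintro rfl
    exact (takeUntil_avoid p hp ha hat) hz1

lemma end_mem_support_tail' {a b : V} (w : G.Walk a b) (hw : 0 < w.length) :
    b ∈ w.support.tail := by
  cases w with
  | nil => simp at hw
  | cons h p => simpa using p.end_mem_support

end Graph

-- ### cycles give biconnected sets

lemma cycle_biconn (N : Network X) {v0 : N.V} (c : N.UG.Walk v0 v0) (hc : c.IsCycle) :
    N.IsBiconn {z | z ∈ c.support} := by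
  classical
  set S : Set N.V := {z | z ∈ c.support} with hSdef
  have hv0 : v0 ∈ S := c.start_mem_support
  constructor
  · haveI : Nonempty ↥S := ⟨⟨v0, hv0⟩⟩
    refine SimpleGraph.Connected.mk ?_
    rintro ⟨a, ha⟩ ⟨b, hb⟩
    have wa := c.takeUntil a ha
    have ra : (N.UG.induce S).Reachable ⟨v0, hv0⟩ ⟨a, ha⟩ :=
      reachable_induce_of_walk (c.takeUntil a ha)
        (fun z hz => (c.support_takeUntil_subset ha) hz) hv0 ha
    have rb : (N.UG.induce S).Reachable ⟨v0, hv0⟩ ⟨b, hb⟩ :=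
      reachable_induce_of_walk (c.takeUntil b hb)
        (fun z hz => (c.support_takeUntil_subset hb) hz) hv0 hb
    exact ra.symm.trans rb
  · intro v hv
    have hc' := hc.rotate hv
    set c' := c.rotate v hv with hc'def
    have hmem : ∀ z, z ∈ c'.support ↔ z ∈ c.support := by
      have hperm := c.support_rotate v hv
      intro z
      constructor
      · intro hz
        rcases List.mem_cons.mp (c'.support_eq_cons ▸ hz) with rfl | hz
        · exact hv
        · rw [c.support_eq_cons]
          exact List.mem_cons_of_mem _ (hperm.mem_iff.mp hz)
      · intro hz
        rcases List.mem_cons.mp (c.support_eq_cons ▸ hz) with hzv | hz'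
        · have h0 : z ∈ c.support.tail := by
            rw [hzv]
            exact end_mem_support_tail' c (by have := hc.three_le_length; omega)
          rw [c'.support_eq_cons]
          exact List.mem_cons_of_mem _ (hperm.mem_iff.mpr h0)
        · rw [c'.support_eq_cons]
          exact List.mem_cons_of_mem _ (hperm.mem_iff.mpr hz')
    rintro ⟨a, ha, hav⟩ ⟨b, hb, hbv⟩
    simp only [Set.mem_singleton_iff] at hav hbv
    -- pass to the rotated cycle c' : Walk v v
    cases hcc : c' with
    | nil =>
      exfalso; have := hc'.three_le_length; rw [hcc] at this; simp at this
    | @cons _ w2 _ hadj P =>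
      have hP : P.IsPath := ((SimpleGraph.Walk.cons_isCycle_iff P hadj).mp (hcc ▸ hc')).1
      have haP : a ∈ P.support := by
        have : a ∈ c'.support := (hmem a).mpr ha
        rw [hcc, SimpleGraph.Walk.support_cons] at this
        rcases List.mem_cons.mp this with rfl | h
        · exact absurd rfl hav
        · exact h
      have hbP : b ∈ P.support := by
        have : b ∈ c'.support := (hmem b).mpr hb
        rw [hcc, SimpleGraph.Walk.support_cons] at this
        rcases List.mem_cons.mp this with rfl | h
        · exact absurd rfl hbv
        · exact h
      obtain ⟨q, hq⟩ := exists_walk_avoid P hP haP hbP hav hbv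
      have hsub : ∀ z ∈ q.support, z ∈ S \ {v} := by
        intro z hz
        obtain ⟨h1, h2⟩ := hq z hz
        refine ⟨(hmem z).mp ?_, h2⟩
        rw [hcc, SimpleGraph.Walk.support_cons]
        exact List.mem_cons_of_mem _ h1
      exact reachable_induce_of_walk q hsub _ _

-- ### unions of biconnected sets

lemma preconn_diff (N : Network X) {S : Set N.V} (hb : N.IsBiconn S) (v : N.V) :
    (N.UG.induce (S \ {v})).Preconnected := by
  by_cases hv : v ∈ S
  · exact hb.2 v hv
  · rw [Set.diff_singleton_eq_self hv]
    exact hb.1.preconnected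

lemma preconn_union_aux (N : Network X) {T1 T2 : Set N.V}
    (h1 : (N.UG.induce T1).Preconnected) (h2 : (N.UG.induce T2).Preconnected)
    {t : N.V} (ht1 : t ∈ T1) (ht2 : t ∈ T2) :
    (N.UG.induce (T1 ∪ T2)).Preconnected := by
  have conn : ∀ c : ↥(T1 ∪ T2), (N.UG.induce (T1 ∪ T2)).Reachable c ⟨t, Or.inl ht1⟩ := by
    rintro ⟨c, hc | hc⟩
    · exact reachable_induce_mono Set.subset_union_left (h1 ⟨c, hc⟩ ⟨t, ht1⟩)
    · have := reachable_induce_mono (Set.subset_union_right (s := T1)) (h2 ⟨c, hc⟩ ⟨t, ht2⟩)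
      exact this
  intro a b
  exact (conn a).trans (conn b).symm

lemma biconn_union (N : Network X) {S1 S2 : Set N.V}
    (h1 : N.IsBiconn S1) (h2 : N.IsBiconn S2) {x y : N.V}
    (hx1 : x ∈ S1) (hx2 : x ∈ S2) (hy1 : y ∈ S1) (hy2 : y ∈ S2) (hxy : x ≠ y) :
    N.IsBiconn (S1 ∪ S2) := by
  constructor
  · haveI : Nonempty ↥(S1 ∪ S2) := ⟨⟨x, Or.inl hx1⟩⟩
    exact SimpleGraph.Connected.mk
      (N.preconn_union_aux h1.1.preconnected h2.1.preconnected hx1 hx2)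
  · intro v hv
    rw [Set.union_diff_distrib]
    by_cases hxv : x = v
    · subst hxv
      exact N.preconn_union_aux (N.preconn_diff h1 x) (N.preconn_diff h2 x)
        (t := y) ⟨hy1, fun h => hxy (h.symm ▸ rfl)⟩ ⟨hy2, fun h => hxy (h.symm ▸ rfl)⟩
    · exact N.preconn_union_aux (N.preconn_diff h1 v) (N.preconn_diff h2 v)
        (t := x) ⟨hx1, hxv⟩ ⟨hx2, hxv⟩

lemma exists_block_superset (N : Network X) {S : Set N.V} (hS : N.IsBiconn S) :
    ∃ B, N.IsBlock B ∧ S ⊆ B := by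
  obtain ⟨B, hB, hmax⟩ := Set.Finite.exists_maximalFor id {B | S ⊆ B ∧ N.IsBiconn B}
    (Set.toFinite _) ⟨S, subset_rfl, hS⟩
  exact ⟨B, ⟨hB.2, fun B' hBB' hB' => Set.Subset.antisymm (hmax ⟨hB.1.trans hBB', hB'⟩ hBB') hBB'⟩, hB.1⟩

lemma hybrid_of_two (N : Network X) {m u1 u2 : N.V} (e1 : N.E u1 m) (e2 : N.E u2 m)
    (h : u1 ≠ u2) : N.IsHybrid m := by
  have hsub : ({u1, u2} : Set N.V) ⊆ {u | N.E u m} := by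
    rintro z (rfl | rfl) <;> assumption
  have hle := Set.ncard_le_ncard hsub (Set.toFinite _)
  rw [Set.ncard_pair h] at hle
  have : 1 < N.inDeg m := by unfold inDeg; omega
  exact this


lemma DP.start_mem_snoc {N : Network X} {u v : N.V} (r : DP N u v) (h : u ≠ v) :
    ∃ l, r.supp = l ++ [v] ∧ u ∈ l := by
  obtain ⟨l, hl⟩ := r.supp_eq_snoc
  refine ⟨l, hl, ?_⟩
  have hu := r.start_mem_supp
  rw [hl, List.mem_append] at hu
  rcases hu with h1 | h1
  · exact h1
  · simp only [List.mem_singleton] at h1; exact absurd h1 h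

-- ### the main cycle construction

lemma cyc_block (N : Network X) {w p q m : N.V} (P1 : DP N w p) (P2 : DP N w q)
    (al : DP N p m) (be : DP N q m)
    (hpq : ¬ N.reach p q) (hqp : ¬ N.reach q p)
    (hm : ∀ z, z ∈ al.supp → z ∈ be.supp → z = m)
    (hw : ∀ z, z ∈ P1.supp → z ∈ P2.supp → z = w) :
    N.IsHybrid m ∧ ∃ S : Set N.V, N.IsBiconn S ∧ w ∈ S ∧ p ∈ S ∧ q ∈ S ∧ m ∈ S := by
  classical
  have hpm : N.reach p m := al.reach_of
  have hqm : N.reach q m := be.reach_of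
  have hwp : N.reach w p := P1.reach_of
  have hwq : N.reach w q := P2.reach_of
  have hpqne : p ≠ q := fun h => hpq (h ▸ N.reach_refl p)
  have hpmne : p ≠ m := fun h => hqp (h ▸ hqm)
  have hqmne : q ≠ m := fun h => hpq (h ▸ hpm)
  have hwpne : w ≠ p := fun h => hpq (h ▸ hwq)
  have hwqne : w ≠ q := fun h => hqp (h ▸ hwp)
  -- decompose α and β
  obtain ⟨u1, al0, e1, hals⟩ := al.snoc_decomp hpmne
  obtain ⟨u2, be0, e2, hbes⟩ := be.snoc_decomp hqmne
  have hmal0 : m ∉ al0.supp := by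
    have := al.supp_nodup
    rw [hals] at this
    intro hmem
    exact (List.disjoint_of_nodup_append this) hmem (by simp)
  have hu1al0 : u1 ∈ al0.supp := al0.end_mem_supp
  have hu1al : u1 ∈ al.supp := by rw [hals]; exact List.mem_append_left _ hu1al0
  have hu2be : u2 ∈ be.supp := by
    rw [hbes]; exact List.mem_append_left _ be0.end_mem_supp
  have hu1m : u1 ≠ m := fun h => hmal0 (h ▸ hu1al0)
  have hu1u2 : u1 ≠ u2 := by
    intro h
    exact hu1m (hm u1 hu1al (h ▸ hu2be))
  have hyb : N.IsHybrid m := N.hybrid_of_two e1 e2 hu1u2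
  refine ⟨hyb, ?_⟩
  -- membership-to-reach facts
  have hmemal0 : ∀ z ∈ al0.supp, N.reach p z ∧ N.reach z m := by
    intro z hz
    obtain ⟨h1, h2⟩ := al0.mem_supp_reach hz
    exact ⟨h1, N.reach_trans h2 (N.E_reach e1)⟩
  have hmemP1 : ∀ z ∈ P1.supp, N.reach w z ∧ N.reach z p := fun z hz => P1.mem_supp_reach hz
  have hmemP2 : ∀ z ∈ P2.supp, N.reach w z ∧ N.reach z q := fun z hz => P2.mem_supp_reach hz
  have hmembe : ∀ z ∈ be.supp, N.reach q z ∧ N.reach z m := fun z hz => be.mem_supp_reach hz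
  -- snoc decomposition of P1
  obtain ⟨l1, hl1, hwl1⟩ := P1.start_mem_snoc hwpne
  have hpl1 : p ∉ l1 := by
    have := P1.supp_nodup
    rw [hl1] at this
    intro hmem
    exact (List.disjoint_of_nodup_append this) hmem (by simp)
  have hl1rev : P1.supp.reverse = p :: l1.reverse := by rw [hl1]; simp
  -- tails
  have hwt2 : w ∉ P2.supp.tail := by
    obtain ⟨t2, ht2⟩ := P2.supp_eq_cons
    have := P2.supp_nodup
    rw [ht2] at this ⊢
    simpa using (List.nodup_cons.mp this).1
  have hqtb : q ∉ be.supp.tail := by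
    obtain ⟨tb, htb⟩ := be.supp_eq_cons
    have := be.supp_nodup
    rw [htb] at this ⊢
    simpa using (List.nodup_cons.mp this).1
  have htailP2 : ∀ z ∈ P2.supp.tail, z ∈ P2.supp := by
    obtain ⟨t2, ht2⟩ := P2.supp_eq_cons
    rw [ht2]; intro z hz; exact List.mem_cons_of_mem _ hz
  have htailbe : ∀ z ∈ be.supp.tail, z ∈ be.supp := by
    obtain ⟨tb, htb⟩ := be.supp_eq_cons
    rw [htb]; intro z hz; exact List.mem_cons_of_mem _ hz
  -- the walks
  set Wa : N.UG.Walk u1 p := al0.toWalk.reverse with hWa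
  set W1 : N.UG.Walk p w := P1.toWalk.reverse with hW1
  set W2 : N.UG.Walk w q := P2.toWalk with hW2
  set Wb : N.UG.Walk q m := be.toWalk with hWb
  set rest : N.UG.Walk u1 m := Wa.append (W1.append (W2.append Wb)) with hrest
  have hrs : rest.support = al0.supp.reverse ++ (l1.reverse ++ (P2.supp.tail ++ be.supp.tail)) := by
    rw [hrest, SimpleGraph.Walk.support_append, SimpleGraph.Walk.tail_support_append,
      SimpleGraph.Walk.tail_support_append, hWa, hW1, hW2, hWb,
      SimpleGraph.Walk.support_reverse, SimpleGraph.Walk.support_reverse,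
      DP.support_toWalk, DP.support_toWalk, DP.support_toWalk, DP.support_toWalk, hl1rev]
    rfl
  -- nodup of the path part
  have hnodup : rest.support.Nodup := by
    rw [hrs]
    refine List.Nodup.append (by simpa using al0.supp_nodup) ?_ ?_
    · refine List.Nodup.append ?_ ?_ ?_
      · have := P1.supp_nodup
        rw [hl1] at this
        simpa using (List.nodup_append.mp this).1
      · refine List.Nodup.append ?_ ?_ ?_
        · obtain ⟨t2, ht2⟩ := P2.supp_eq_cons
          have := P2.supp_nodup; rw [ht2] at this ⊢
          simpa using (List.nodup_cons.mp this).2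
        · obtain ⟨tb, htb⟩ := be.supp_eq_cons
          have := be.supp_nodup; rw [htb] at this ⊢
          simpa using (List.nodup_cons.mp this).2
        · -- P2.tail vs be.tail
          intro z hz1 hz2
          have hz1' := htailP2 z hz1
          have hz2' := htailbe z hz2
          have : z = q := N.reach_antisymm (hmemP2 z hz1').2 (hmembe z hz2').1
          exact hqtb (this ▸ hz2)
      · -- l1.reverse vs (P2.tail ++ be.tail)
        intro z hz1 hz2
        rw [List.mem_reverse] at hz1
        have hzP1 : z ∈ P1.supp := by rw [hl1]; exact List.mem_append_left _ hz1
        rw [List.mem_append] at hz2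
        rcases hz2 with hz2 | hz2
        · have : z = w := hw z hzP1 (htailP2 z hz2)
          exact hwt2 (this ▸ hz2)
        · exact hqp (N.reach_trans (hmembe z (htailbe z hz2)).1 (hmemP1 z hzP1).2)
    · -- al0.reverse vs the rest
      intro z hz1 hz2
      rw [List.mem_reverse] at hz1
      rw [List.mem_append] at hz2
      rcases hz2 with hz2 | hz2
      · rw [List.mem_reverse] at hz2
        have hzP1 : z ∈ P1.supp := by rw [hl1]; exact List.mem_append_left _ hz2
        have : z = p := N.reach_antisymm (hmemP1 z hzP1).2 (hmemal0 z hz1).1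
        exact hpl1 (this ▸ hz2)
      · rw [List.mem_append] at hz2
        rcases hz2 with hz2 | hz2
        · exact hpq (N.reach_trans (hmemal0 z hz1).1 (hmemP2 z (htailP2 z hz2)).2)
        · have hzal : z ∈ al.supp := by rw [hals]; exact List.mem_append_left _ hz1
          have : z = m := hm z hzal (htailbe z hz2)
          exact hmal0 (this ▸ hz1)
  have hmu1 : m ≠ u1 := fun h => hu1m h.symm
  have adj : N.UG.Adj m u1 := ⟨hmu1, Or.inr e1⟩
  have hpath : rest.IsPath := by
    rw [SimpleGraph.Walk.isPath_def]; exact hnodup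
  have hedge : ¬ s(m, u1) ∈ rest.edges := by
    intro hmem
    rw [hrest, SimpleGraph.Walk.edges_append, SimpleGraph.Walk.edges_append,
      SimpleGraph.Walk.edges_append] at hmem
    rcases List.mem_append.mp hmem with h | h
    · have := SimpleGraph.Walk.fst_mem_support_of_mem_edges _ h
      rw [hWa, SimpleGraph.Walk.support_reverse, DP.support_toWalk, List.mem_reverse] at this
      exact hmal0 this
    rcases List.mem_append.mp h with h | h
    · have := SimpleGraph.Walk.fst_mem_support_of_mem_edges _ h
      rw [hW1, SimpleGraph.Walk.support_reverse, DP.support_toWalk, List.mem_reverse] at this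
      exact hpmne (N.reach_antisymm hpm (hmemP1 m this).2)
    rcases List.mem_append.mp h with h | h
    · have := SimpleGraph.Walk.fst_mem_support_of_mem_edges _ h
      rw [hW2, DP.support_toWalk] at this
      exact hqmne (N.reach_antisymm hqm (hmemP2 m this).2)
    · have := SimpleGraph.Walk.snd_mem_support_of_mem_edges _ h
      rw [hWb, DP.support_toWalk] at this
      exact hu1m (hm u1 hu1al this)
  have hcyc : (SimpleGraph.Walk.cons adj rest).IsCycle :=
    (SimpleGraph.Walk.cons_isCycle_iff rest adj).mpr ⟨hpath, hedge⟩
  refine ⟨{z | z ∈ (SimpleGraph.Walk.cons adj rest).support}, N.cycle_biconn _ hcyc, ?_, ?_, ?_, ?_⟩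
  · show w ∈ (SimpleGraph.Walk.cons adj rest).support
    rw [SimpleGraph.Walk.support_cons]
    refine List.mem_cons_of_mem _ ?_
    rw [hrs]
    exact List.mem_append_right _ (List.mem_append_left _ (by rw [List.mem_reverse]; exact hwl1))
  · show p ∈ (SimpleGraph.Walk.cons adj rest).support
    rw [SimpleGraph.Walk.support_cons]
    refine List.mem_cons_of_mem _ ?_
    rw [hrs]
    exact List.mem_append_left _ (by rw [List.mem_reverse]; exact al0.start_mem_supp)
  · show q ∈ (SimpleGraph.Walk.cons adj rest).support
    rw [SimpleGraph.Walk.support_cons]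
    refine List.mem_cons_of_mem _ ?_
    rw [hrs]
    exact List.mem_append_right _ (List.mem_append_right _
      (List.mem_append_left _ (P2.end_mem_supp_tail hwqne)))
  · show m ∈ (SimpleGraph.Walk.cons adj rest).support
    rw [SimpleGraph.Walk.support_cons]
    exact List.mem_cons_self


-- ### unique maximal common descendants

lemma exists_max_join (N : Network X) {p q c : N.V} (hpc : N.reach p c) (hqc : N.reach q c) :
    ∃ m, N.reach p m ∧ N.reach q m ∧ N.reach m c ∧
      ∀ z, N.reach p z → N.reach q z → N.reach z m → z = m := by
  obtain ⟨m, hm, hmax⟩ := N.exists_reach_max {z | N.reach p z ∧ N.reach q z ∧ N.reach z c}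
    ⟨c, hpc, hqc, N.reach_refl c⟩
  exact ⟨m, hm.1, hm.2.1, hm.2.2,
    fun z h1 h2 h3 => hmax z ⟨h1, h2, N.reach_trans h3 hm.2.2⟩ h3⟩

lemma max_join_unique (N : Network X) (hL1 : N.Level1) {p q m1 m2 : N.V}
    (hpq : ¬ N.reach p q) (hqp : ¬ N.reach q p)
    (h1p : N.reach p m1) (h1q : N.reach q m1)
    (h2p : N.reach p m2) (h2q : N.reach q m2)
    (hmax1 : ∀ z, N.reach p z → N.reach q z → N.reach z m1 → z = m1)
    (hmax2 : ∀ z, N.reach p z → N.reach q z → N.reach z m2 → z = m2) : m1 = m2 := by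
  by_contra hne
  have hpqne : p ≠ q := fun h => hpq (h ▸ N.reach_refl p)
  obtain ⟨r, hr⟩ := N.exists_top
  obtain ⟨w, hwmem, hwmin⟩ := N.exists_reach_min {u | N.reach u p ∧ N.reach u q} ⟨r, hr p, hr q⟩
  obtain ⟨P1⟩ := DP.exists_dp (N := N) hwmem.1
  obtain ⟨P2⟩ := DP.exists_dp (N := N) hwmem.2
  obtain ⟨A1⟩ := DP.exists_dp (N := N) h1p
  obtain ⟨B1⟩ := DP.exists_dp (N := N) h1q
  obtain ⟨A2⟩ := DP.exists_dp (N := N) h2p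
  obtain ⟨B2⟩ := DP.exists_dp (N := N) h2q
  have hwcond : ∀ z, z ∈ P1.supp → z ∈ P2.supp → z = w := fun z hz1 hz2 =>
    hwmin z ⟨(P1.mem_supp_reach hz1).2, (P2.mem_supp_reach hz2).2⟩ (P1.mem_supp_reach hz1).1
  obtain ⟨hyb1, S1, hS1, hwS1, hpS1, hqS1, hmS1⟩ :=
    N.cyc_block P1 P2 A1 B1 hpq hqp
      (fun z hz1 hz2 => hmax1 z (A1.mem_supp_reach hz1).1 (B1.mem_supp_reach hz2).1
        (A1.mem_supp_reach hz1).2) hwcond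
  obtain ⟨hyb2, S2, hS2, hwS2, hpS2, hqS2, hmS2⟩ :=
    N.cyc_block P1 P2 A2 B2 hpq hqp
      (fun z hz1 hz2 => hmax2 z (A2.mem_supp_reach hz1).1 (B2.mem_supp_reach hz2).1
        (A2.mem_supp_reach hz1).2) hwcond
  have hub := N.biconn_union hS1 hS2 hpS1 hpS2 hqS1 hqS2 hpqne
  obtain ⟨B, hB, hsub⟩ := N.exists_block_superset hub
  have hbad := hL1 B hB
  have hm1mem : m1 ∈ {v | v ∈ B ∧ N.IsHybrid v ∧ ∃ u ∈ B, u ≠ v ∧ N.reach u v} :=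
    ⟨hsub (Or.inl hmS1), hyb1, p, hsub (Or.inl hpS1),
      fun h => hqp (by rw [← h] at h1q; exact h1q), h1p⟩
  have hm2mem : m2 ∈ {v | v ∈ B ∧ N.IsHybrid v ∧ ∃ u ∈ B, u ≠ v ∧ N.reach u v} :=
    ⟨hsub (Or.inr hmS2), hyb2, p, hsub (Or.inl hpS1),
      fun h => hqp (by rw [← h] at h2q; exact h2q), h2p⟩
  exact hne (hbad hm1mem hm2mem)

lemma two_child_join_unique (N : Network X) (hL1 : N.Level1) {v c0 c1 c2 M1 M2 : N.V}
    (e0 : N.E v c0) (e1 : N.E v c1) (e2 : N.E v c2)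
    (h01 : c0 ≠ c1) (h02 : c0 ≠ c2)
    (i01 : ¬ N.reach c0 c1) (i10 : ¬ N.reach c1 c0)
    (i02 : ¬ N.reach c0 c2) (i20 : ¬ N.reach c2 c0)
    (h1r0 : N.reach c0 M1) (h1r1 : N.reach c1 M1)
    (h2r0 : N.reach c0 M2) (h2r2 : N.reach c2 M2)
    (hmax1 : ∀ z, N.reach c0 z → N.reach c1 z → N.reach z M1 → z = M1)
    (hmax2 : ∀ z, N.reach c0 z → N.reach c2 z → N.reach z M2 → z = M2) :
    M1 = M2 := by
  by_contra hne
  obtain ⟨A1⟩ := DP.exists_dp (N := N) h1r0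
  obtain ⟨B1⟩ := DP.exists_dp (N := N) h1r1
  obtain ⟨A2⟩ := DP.exists_dp (N := N) h2r0
  obtain ⟨B2⟩ := DP.exists_dp (N := N) h2r2
  set P0 : DP N v c0 := .cons e0 (.nil c0) with hP0
  set Q1 : DP N v c1 := .cons e1 (.nil c1) with hQ1
  set Q2 : DP N v c2 := .cons e2 (.nil c2) with hQ2
  have hw1 : ∀ z, z ∈ P0.supp → z ∈ Q1.supp → z = v := by
    intro z hz1 hz2
    rw [hP0] at hz1; rw [hQ1] at hz2
    simp [DP.supp] at hz1 hz2
    rcases hz1 with rfl | rfl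
    · rfl
    · rcases hz2 with h | h
      · exact h
      · exact absurd h h01
  have hw2 : ∀ z, z ∈ P0.supp → z ∈ Q2.supp → z = v := by
    intro z hz1 hz2
    rw [hP0] at hz1; rw [hQ2] at hz2
    simp [DP.supp] at hz1 hz2
    rcases hz1 with rfl | rfl
    · rfl
    · rcases hz2 with h | h
      · exact h
      · exact absurd h h02
  obtain ⟨hyb1, S1, hS1, hvS1, hc0S1, hc1S1, hM1S1⟩ :=
    N.cyc_block P0 Q1 A1 B1 i01 i10
      (fun z hz1 hz2 => hmax1 z (A1.mem_supp_reach hz1).1 (B1.mem_supp_reach hz2).1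
        (A1.mem_supp_reach hz1).2) hw1
  obtain ⟨hyb2, S2, hS2, hvS2, hc0S2, hc2S2, hM2S2⟩ :=
    N.cyc_block P0 Q2 A2 B2 i02 i20
      (fun z hz1 hz2 => hmax2 z (A2.mem_supp_reach hz1).1 (B2.mem_supp_reach hz2).1
        (A2.mem_supp_reach hz1).2) hw2
  have hub := N.biconn_union hS1 hS2 hvS1 hvS2 hc0S1 hc0S2 (N.E_ne e0)
  obtain ⟨B, hB, hsub⟩ := N.exists_block_superset hub
  have hbad := hL1 B hB
  have hm1mem : M1 ∈ {z | z ∈ B ∧ N.IsHybrid z ∧ ∃ u ∈ B, u ≠ z ∧ N.reach u z} :=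
    ⟨hsub (Or.inl hM1S1), hyb1, c0, hsub (Or.inl hc0S1),
      fun h => i10 (by rw [← h] at h1r1; exact h1r1), h1r0⟩
  have hm2mem : M2 ∈ {z | z ∈ B ∧ N.IsHybrid z ∧ ∃ u ∈ B, u ≠ z ∧ N.reach u z} :=
    ⟨hsub (Or.inr hM2S2), hyb2, c0, hsub (Or.inl hc0S1),
      fun h => i20 (by rw [← h] at h2r2; exact h2r2), h2r0⟩
  exact hne (hbad hm1mem hm2mem)


-- ### level-1 networks are lca-networks

lemma level1_lcaNetwork [Fintype X] (N : Network X) (hL1 : N.Level1) : N.LcaNetwork := by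
  intro A hA
  obtain ⟨r, hr⟩ := N.exists_top
  obtain ⟨v, hv, hvmin⟩ := N.exists_reach_min {u | A ⊆ N.cluster u} ⟨r, fun x _ => hr _⟩
  have hvLCA : v ∈ N.LCA A := ⟨hv, fun u hu hru => hvmin u hu hru⟩
  refine ⟨v, Set.eq_singleton_iff_unique_mem.mpr ⟨hvLCA, ?_⟩⟩
  intro p hp
  by_contra hne
  have hpv : ¬ N.reach p v := fun h => hne (hp.2 v hv h).symm
  have hvp : ¬ N.reach v p := fun h => hne ((hvmin p hp.1 h).symm ▸ rfl)
  obtain ⟨x0, hx0⟩ := hA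
  haveI : DecidableEq X := Classical.decEq X
  have key : ∀ s : Finset X, (∀ x ∈ s, x ∈ A) → s.Nonempty →
      ∃ d, N.reach p d ∧ N.reach v d ∧ ∀ x ∈ s, N.reach d (N.leafEmb x) := by
    intro s
    induction s using Finset.induction_on with
    | empty => intro _ h; exact absurd h (by simp)
    | @insert a s ha IH =>
      intro hmem _
      by_cases hs : s.Nonempty
      · obtain ⟨d0, hd0p, hd0v, hd0⟩ := IH (fun x hx => hmem x (Finset.mem_insert_of_mem hx)) hs
        have hpa : N.reach p (N.leafEmb a) := hp.1 (hmem a (Finset.mem_insert_self a s))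
        have hva : N.reach v (N.leafEmb a) := hv (hmem a (Finset.mem_insert_self a s))
        obtain ⟨m1, h1p, h1v, h1c, hmax1⟩ := N.exists_max_join hd0p hd0v
        obtain ⟨m2, h2p, h2v, h2c, hmax2⟩ := N.exists_max_join hpa hva
        have heq : m1 = m2 := N.max_join_unique hL1 hpv hvp h1p h1v h2p h2v hmax1 hmax2
        refine ⟨m1, h1p, h1v, ?_⟩
        intro x hx
        rcases Finset.mem_insert.mp hx with rfl | hx
        · exact heq ▸ h2c
        · exact N.reach_trans h1c (hd0 x hx)
      · rw [Finset.not_nonempty_iff_eq_empty] at hs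
        subst hs
        have haA := hmem a (Finset.mem_insert_self a ∅)
        refine ⟨N.leafEmb a, hp.1 haA, hv haA, ?_⟩
        intro x hx
        rcases Finset.mem_insert.mp hx with rfl | hx
        · exact N.reach_refl _
        · simp at hx
  obtain ⟨d, hdp, hdv, hd⟩ := key (Set.toFinite A).toFinset
    (fun x hx => (Set.Finite.mem_toFinset _).mp hx)
    (by rw [Set.Finite.toFinset_nonempty]; exact ⟨x0, hx0⟩)
  have hdA : A ⊆ N.cluster d := fun x hx => hd x ((Set.Finite.mem_toFinset _).mpr hx)
  have h1 : d = p := hp.2 d hdA hdp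
  have h2 : d = v := hvmin d hdA hdv
  exact hne (h1 ▸ h2)

-- ### the strong lca property

lemma level1_strong_pair [Fintype X] (N : Network X) (hL1 : N.Level1) (A : Set X)
    (hA : A.Nonempty) : ∃ x ∈ A, ∃ y ∈ A, N.LCA ({x, y} : Set X) = N.LCA A := by
  obtain ⟨v, hvA⟩ := N.level1_lcaNetwork hL1 A hA
  have hvmem : v ∈ N.LCA A := by rw [hvA]; rfl
  have hv1 : A ⊆ N.cluster v := hvmem.1
  have hv2 : ∀ u, A ⊆ N.cluster u → N.reach v u → u = v := hvmem.2
  by_cases hsing : ∃ x ∈ A, A ⊆ {x}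
  · obtain ⟨x, hx, hsub⟩ := hsing
    have hAx : A = {x} := Set.Subset.antisymm hsub (by simpa using hx)
    refine ⟨x, hx, x, hx, ?_⟩
    rw [Set.pair_eq_singleton, ← hAx]
  · by_contra hno
    push_neg at hno
    -- every pair of elements of A is covered by a common child of v
    have cocover : ∀ x ∈ A, ∀ y ∈ A,
        ∃ c, N.E v c ∧ x ∈ N.cluster c ∧ y ∈ N.cluster c := by
      intro x hx y hy
      obtain ⟨g, hg⟩ := N.level1_lcaNetwork hL1 {x, y} ⟨x, by simp⟩
      have hgmem : g ∈ N.LCA {x, y} := by rw [hg]; rfl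
      have hpairv : ({x, y} : Set X) ⊆ N.cluster v := by
        rintro z (rfl | rfl)
        · exact hv1 hx
        · exact hv1 hy
      obtain ⟨d, hd, hdmin⟩ := N.exists_reach_min
        {u | ({x, y} : Set X) ⊆ N.cluster u ∧ N.reach v u} ⟨v, hpairv, N.reach_refl v⟩
      have hdLCA : d ∈ N.LCA {x, y} :=
        ⟨hd.1, fun u hu hdu => hdmin u ⟨hu, N.reach_trans hd.2 hdu⟩ hdu⟩
      have hdg : d = g := by rw [hg] at hdLCA; exact hdLCA
      have hvg : N.reach v g := hdg ▸ hd.2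
      have hgv : g ≠ v := by
        intro h
        exact hno x hx y hy (by rw [hg, h, hvA])
      rcases (Relation.ReflTransGen.cases_head hvg) with h | ⟨c, hc, hcg⟩
      · exact absurd h.symm hgv
      · exact ⟨c, hc, N.cluster_mono hcg (hgmem.1 (by simp)),
          N.cluster_mono hcg (hgmem.1 (by simp))⟩
    have hnochild : ∀ c, N.E v c → ¬ A ⊆ N.cluster c := by
      intro c hc hAc
      exact N.E_ne hc (hv2 c hAc (N.E_reach hc)).symm
    have maxchild : ∀ c, N.E v c → ∃ d, N.E v d ∧ N.cluster c ⊆ N.cluster d ∧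
        ∀ d', N.E v d' → N.cluster d ⊆ N.cluster d' → N.cluster d' = N.cluster d := by
      intro c hc
      obtain ⟨D, hD, hDmax⟩ := Set.Finite.exists_maximalFor id
        {D : Set X | (∃ d, N.E v d ∧ N.cluster d = D) ∧ N.cluster c ⊆ D}
        (Set.toFinite _) ⟨N.cluster c, ⟨c, hc, rfl⟩, subset_rfl⟩
      obtain ⟨⟨d, hd, rfl⟩, hcD⟩ := hD
      exact ⟨d, hd, hcD, fun d' hd' hsub =>
        Set.Subset.antisymm (hDmax ⟨⟨d', hd', rfl⟩, hcD.trans hsub⟩ hsub) hsub⟩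
    -- incomparability of distinct maximal children
    have incomp : ∀ d d', N.E v d → N.E v d' →
        (∀ e', N.E v e' → N.cluster d ⊆ N.cluster e' → N.cluster e' = N.cluster d) →
        (∀ e', N.E v e' → N.cluster d' ⊆ N.cluster e' → N.cluster e' = N.cluster d') →
        N.cluster d ≠ N.cluster d' → ¬ N.reach d d' := by
      intro d d' hd hd' hmaxd hmaxd' hne hreach
      exact hne (hmaxd' d hd (N.cluster_mono hreach))
    -- select the configuration
    obtain ⟨x1, hx1⟩ := hA
    obtain ⟨c, hc, hxc, -⟩ := cocover x1 hx1 x1 hx1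
    obtain ⟨d1, hd1, hsub1, hmax1⟩ := maxchild c hc
    have hx1d1 : x1 ∈ N.cluster d1 := hsub1 hxc
    obtain ⟨z1, hz1A, hz1⟩ : ∃ z ∈ A, z ∉ N.cluster d1 := by
      by_contra h
      push_neg at h
      exact hnochild d1 hd1 h
    obtain ⟨c', hc', hx1c', hz1c'⟩ := cocover x1 hx1 z1 hz1A
    obtain ⟨d2, hd2, hsub2, hmax2⟩ := maxchild c' hc'
    have hx1d2 : x1 ∈ N.cluster d2 := hsub2 hx1c'
    have hz1d2 : z1 ∈ N.cluster d2 := hsub2 hz1c'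
    have hD12 : N.cluster d1 ≠ N.cluster d2 := fun h => hz1 (h ▸ hz1d2)
    by_cases hrest : ∃ z ∈ A, z ∉ N.cluster d1 ∧ z ∉ N.cluster d2
    · obtain ⟨z2, hz2A, hz2d1, hz2d2⟩ := hrest
      obtain ⟨c'', hc'', hz1c'', hz2c''⟩ := cocover z1 hz1A z2 hz2A
      obtain ⟨d3, hd3, hsub3, hmax3⟩ := maxchild c'' hc''
      have hz1d3 : z1 ∈ N.cluster d3 := hsub3 hz1c''
      have hz2d3 : z2 ∈ N.cluster d3 := hsub3 hz2c''
      have hD23 : N.cluster d2 ≠ N.cluster d3 := fun h => hz2d2 (h.symm ▸ hz2d3)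
      -- pairs (d2,d1) with target x1, (d2,d3) with target z1; both through v and d2
      obtain ⟨M1, hM1a, hM1b, hM1c, hM1max⟩ := N.exists_max_join
        (p := d2) (q := d1) (c := N.leafEmb x1) hx1d2 hx1d1
      obtain ⟨M2, hM2a, hM2b, hM2c, hM2max⟩ := N.exists_max_join
        (p := d2) (q := d3) (c := N.leafEmb z1) hz1d2 hz1d3
      have hMne : M1 ≠ M2 := by
        intro h
        exact hz1 (N.reach_trans hM1b (h ▸ hM2c))
      have hd2d1 : d2 ≠ d1 := fun h => hD12 (h ▸ rfl)
      have hd2d3 : d2 ≠ d3 := fun h => hD23 (h ▸ rfl)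
      exact hMne (N.two_child_join_unique hL1 hd2 hd1 hd3 hd2d1 hd2d3
        (incomp d2 d1 hd2 hd1 hmax2 hmax1 (Ne.symm hD12))
        (incomp d1 d2 hd1 hd2 hmax1 hmax2 hD12)
        (incomp d2 d3 hd2 hd3 hmax2 hmax3 hD23)
        (incomp d3 d2 hd3 hd2 hmax3 hmax2 (Ne.symm hD23))
        hM1a hM1b hM2a hM2b hM1max hM2max)
    · push_neg at hrest
      obtain ⟨a1, ha1A, ha1⟩ : ∃ a ∈ A, a ∉ N.cluster d2 := by
        by_contra h
        push_neg at h
        exact hnochild d2 hd2 h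
      have ha1d1 : a1 ∈ N.cluster d1 := by
        by_contra h
        exact ha1 (hrest a1 ha1A h)
      obtain ⟨c'', hc'', ha1c'', hz1c''⟩ := cocover a1 ha1A z1 hz1A
      obtain ⟨d3, hd3, hsub3, hmax3⟩ := maxchild c'' hc''
      have ha1d3 : a1 ∈ N.cluster d3 := hsub3 ha1c''
      have hz1d3 : z1 ∈ N.cluster d3 := hsub3 hz1c''
      have hD13 : N.cluster d1 ≠ N.cluster d3 := fun h => hz1 (h.symm ▸ hz1d3)
      have hD23 : N.cluster d2 ≠ N.cluster d3 := fun h => ha1 (h.symm ▸ ha1d3)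
      -- pairs (d3,d1) with target a1, (d3,d2) with target z1; both through v and d3
      obtain ⟨M1, hM1a, hM1b, hM1c, hM1max⟩ := N.exists_max_join
        (p := d3) (q := d1) (c := N.leafEmb a1) ha1d3 ha1d1
      obtain ⟨M2, hM2a, hM2b, hM2c, hM2max⟩ := N.exists_max_join
        (p := d3) (q := d2) (c := N.leafEmb z1) hz1d3 hz1d2
      have hMne : M1 ≠ M2 := by
        intro h
        exact hz1 (N.reach_trans hM1b (h ▸ hM2c))
      have hd3d1 : d3 ≠ d1 := fun h => hD13 (h ▸ rfl)
      have hd3d2 : d3 ≠ d2 := fun h => hD23 (h ▸ rfl)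
      exact hMne (N.two_child_join_unique hL1 hd3 hd1 hd2 hd3d1 hd3d2
        (incomp d3 d1 hd3 hd1 hmax3 hmax1 (Ne.symm hD13))
        (incomp d1 d3 hd1 hd3 hmax1 hmax3 hD13)
        (incomp d3 d2 hd3 hd2 hmax3 hmax2 (Ne.symm hD23))
        (incomp d2 d3 hd2 hd3 hmax2 hmax3 hD23)
        hM1a hM1b hM2a hM2b hM1max hM2max)

end Network


/-- Every level-1 network is a strong lca-network: every nonempty
`A ⊆ X` has a unique least common ancestor, attained as the lca of a pair of
elements of `A`. -/
theorem level1_strongLca (X : Type) [Fintype X] (N : Network X)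
    (hL1 : N.Level1) :
    N.StrongLca :=
  ⟨N.level1_lcaNetwork hL1, fun A hA => N.level1_strong_pair hL1 A hA⟩

end PhyloNet
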